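/- Let Γ be a compact connected set of finite H¹ measure in a metric space, and let X be a 2^{-n}-net for Γ (a maximal 2^{-n}-separated subset). Then the cardinality of X satisfies #X · 2^{-n-1} ≤ H¹(Γ); in particular #X ≤ 2^{n+1}·H¹(Γ). -/

import Mathlib

open MeasureTheory ENNReal NNReal

-- image of connected set under dist x contains an interval
lemma dist_le_hausdorff_inter_ball {M : Type*} [MetricSpace M] [MeasurableSpace M] [BorelSpace M]
    (Γ : Set M) (hconn : IsConnected Γ) (x : M) (hx : x ∈ Γ) {rr : ℝ} (hrr : 0 ≤ rr)
    (y : M) (hy : y ∈ Γ) (hxy : rr ≤ dist x y) :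
    ENNReal.ofReal rr ≤ μH[1] (Γ ∩ Metric.ball x rr) := by
  have himg : Set.Ico 0 rr ⊆ (dist x) '' (Γ ∩ Metric.ball x rr) := by
    intro t ht
    have hIcc : Set.Icc 0 (dist x y) ⊆ (dist x) '' Γ := by
      have hpre : IsPreconnected ((dist x) '' Γ) :=
        hconn.isPreconnected.image _ ((LipschitzWith.dist_right x).continuous.continuousOn)
      exact hpre.Icc_subset ⟨x, hx, by simp⟩ ⟨y, hy, rfl⟩
    obtain ⟨z, hz, hzt⟩ := hIcc ⟨ht.1, le_trans ht.2.le hxy⟩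
    exact ⟨z, ⟨hz, by simp [Metric.mem_ball, dist_comm, hzt, ht.2]⟩, hzt⟩
  calc ENNReal.ofReal rr = μH[1] (Set.Ico 0 rr) := by
        rw [MeasureTheory.hausdorffMeasure_real]; simp
    _ ≤ μH[1] ((dist x) '' (Γ ∩ Metric.ball x rr)) := measure_mono himg
    _ ≤ μH[1] (Γ ∩ Metric.ball x rr) := by
        simpa using (LipschitzWith.dist_right x).hausdorffMeasure_image_le zero_le_one _

theorem net_card_le_length {M : Type*} [MetricSpace M] [MeasurableSpace M] [BorelSpace M]
    (Γ : Set M) (hcomp : IsCompact Γ) (hconn : IsConnected Γ) (hfin : μH[1] Γ < ⊤)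
    (n : ℕ) (X : Set M) (hXΓ : X ⊆ Γ)
    (hsep : ∀ x ∈ X, ∀ y ∈ X, x ≠ y → (2 : ℝ) ^ (-(n : ℤ)) < dist x y)
    (hdense : ∀ y ∈ Γ, ∃ x ∈ X, dist x y ≤ (2 : ℝ) ^ (-(n : ℤ)))
    (hdiam : (2 : ℝ≥0∞) ^ (-(n : ℤ) - 1) < EMetric.diam Γ) :
    X.Finite ∧ (X.ncard : ℝ≥0∞) * (2 : ℝ≥0∞) ^ (-(n : ℤ) - 1) ≤ μH[1] Γ := by
  set rr : ℝ := (2 : ℝ) ^ (-(n : ℤ) - 1) with hrr_def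
  have hrr_pos : 0 < rr := by positivity
  have hofReal : ENNReal.ofReal rr = (2 : ℝ≥0∞) ^ (-(n : ℤ) - 1) := by
    have : (-(n : ℤ) - 1) = -((n+1 : ℕ) : ℤ) := by push_cast; ring
    rw [this, hrr_def, this, zpow_neg, zpow_natCast,
      ENNReal.zpow_neg, zpow_natCast,
      ENNReal.ofReal_inv_of_pos (by positivity), ENNReal.ofReal_pow (by norm_num)]
    norm_num
  have htwo : (2:ℝ) * rr = (2:ℝ) ^ (-(n:ℤ)) := by
    rw [hrr_def]; rw [sub_eq_add_neg, zpow_add₀ (by norm_num : (2:ℝ) ≠ 0)]; ring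
  have hdiam_le : EMetric.diam Γ ≤ μH[1] Γ := by
    apply EMetric.diam_le
    intro a ha b hb
    rw [edist_dist]
    calc ENNReal.ofReal (dist a b)
        ≤ μH[1] (Γ ∩ Metric.ball a (dist a b)) :=
          dist_le_hausdorff_inter_ball Γ hconn a ha dist_nonneg b hb le_rfl
      _ ≤ μH[1] Γ := measure_mono Set.inter_subset_left
  by_cases hcase : ∃ x ∈ X, Γ ⊆ Metric.ball x rr
  · -- Γ is contained in a small ball; then X is a singleton
    obtain ⟨x, hxX, hball⟩ := hcase
    have hXsing : X = {x} := by
      apply Set.eq_singleton_iff_unique_mem.2 ⟨hxX, fun y hyX => ?_⟩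
      by_contra hne
      have h1 := hsep x hxX y hyX (Ne.symm hne)
      have h2 : dist x y < rr := by
        have := hball (hXΓ hyX)
        rwa [Metric.mem_ball, dist_comm] at this
      rw [← htwo] at h1
      nlinarith
    rw [hXsing]
    refine ⟨Set.finite_singleton x, ?_⟩
    simp only [Set.ncard_singleton, Nat.cast_one, one_mul]
    exact le_trans hdiam.le hdiam_le
  · push_neg at hcase
    have hfar : ∀ x ∈ X, ∃ y ∈ Γ, rr ≤ dist x y := by
      intro x hx
      obtain ⟨y, hyΓ, hy⟩ := Set.not_subset.1 (hcase x hx)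
      exact ⟨y, hyΓ, by rw [dist_comm]; simpa [Metric.mem_ball] using hy⟩
    have hkey : ∀ x ∈ X, (2 : ℝ≥0∞) ^ (-(n : ℤ) - 1) ≤ μH[1] (Γ ∩ Metric.ball x rr) := by
      intro x hx
      obtain ⟨y, hyΓ, hy⟩ := hfar x hx
      rw [← hofReal]
      exact dist_le_hausdorff_inter_ball Γ hconn x (hXΓ hx) hrr_pos.le y hyΓ hy
    have hsum : ∀ F : Finset M, ↑F ⊆ X →
        (F.card : ℝ≥0∞) * (2 : ℝ≥0∞) ^ (-(n : ℤ) - 1) ≤ μH[1] Γ := by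
      intro F hF
      have hdisj : (↑F : Set M).Pairwise
          (Function.onFun Disjoint fun x => Γ ∩ Metric.ball x rr) := by
        intro a ha b hb hab
        have hd := hsep a (hF ha) b (hF hb) hab
        rw [← htwo] at hd
        exact Disjoint.mono Set.inter_subset_right Set.inter_subset_right
          (Metric.ball_disjoint_ball (by linarith))
      have hmeas : ∀ x ∈ F, MeasurableSet (Γ ∩ Metric.ball x rr) := fun x _ =>
        hcomp.isClosed.measurableSet.inter Metric.isOpen_ball.measurableSet
      calc (F.card : ℝ≥0∞) * (2 : ℝ≥0∞) ^ (-(n : ℤ) - 1)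
          = ∑ _x ∈ F, (2 : ℝ≥0∞) ^ (-(n : ℤ) - 1) := by
            rw [Finset.sum_const, nsmul_eq_mul]
        _ ≤ ∑ x ∈ F, μH[1] (Γ ∩ Metric.ball x rr) :=
            Finset.sum_le_sum fun x hx => hkey x (hF hx)
        _ = μH[1] (⋃ x ∈ F, Γ ∩ Metric.ball x rr) :=
            (measure_biUnion_finset hdisj hmeas).symm
        _ ≤ μH[1] Γ := measure_mono (by
            apply Set.iUnion₂_subset
            intro x _
            exact Set.inter_subset_left)
    have hr_pos : (0 : ℝ≥0∞) < (2 : ℝ≥0∞) ^ (-(n : ℤ) - 1) := by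
      apply ENNReal.zpow_pos (by norm_num) (by norm_num)
    have hr_ne_top : (2 : ℝ≥0∞) ^ (-(n : ℤ) - 1) ≠ ⊤ :=
      (ENNReal.zpow_lt_top (by norm_num) (by norm_num) _).ne
    have hXfin : X.Finite := by
      by_contra hinf
      have hinf' : X.Infinite := hinf
      obtain ⟨k, hk⟩ := ENNReal.exists_nat_gt
        (ENNReal.div_lt_top hfin.ne hr_pos.ne').ne
      obtain ⟨t, htX, htfin, htcard⟩ := hinf'.exists_subset_ncard_eq k
      have hle := hsum htfin.toFinset (by simpa using htX)
      have hcard : htfin.toFinset.card = k := by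
        rw [← htcard, Set.ncard_eq_toFinset_card t htfin]
      rw [hcard] at hle
      have : μH[1] Γ < (k : ℝ≥0∞) * (2 : ℝ≥0∞) ^ (-(n : ℤ) - 1) := by
        rw [← ENNReal.div_lt_iff (Or.inl hr_pos.ne') (Or.inl hr_ne_top)]
        exact hk
      exact absurd hle (not_le.2 this)
    refine ⟨hXfin, ?_⟩
    have hle := hsum hXfin.toFinset (by simp)
    rwa [← Set.ncard_eq_toFinset_card X hXfin] at hle
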